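/- Let v > 1, let t ≥ 0 and x ≥ 0 with t ≥ x, x ≤ a, and a > 0. If x = a(v-1)/(v+1), then (t + a - x)/(t + (a-x)/v) ≤ (v² + v)/(v² - v + 2). -/

import Mathlib

/-- competitive-analysis inequality for the two-robot online
algorithm. -/
theorem competitive_ineq (v t x a : ℝ) (hv : 1 < v) (ht : 0 ≤ t) (hx : 0 ≤ x)
    (htx : x ≤ t) (hxa : x ≤ a) (ha : 0 < a)
    (hxval : x = a * (v - 1) / (v + 1)) :
    (t + a - x) / (t + (a - x) / v) ≤ (v ^ 2 + v) / (v ^ 2 - v + 2) := by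
  have hv0 : 0 < v := by linarith
  have hv1 : 0 < v + 1 := by linarith
  have hax : 0 < a - x := by
    rw [hxval, sub_pos, div_lt_iff₀ hv1]
    nlinarith
  have hden : 0 < t + (a - x) / v := by positivity
  have hden2 : 0 < v ^ 2 - v + 2 := by nlinarith
  rw [div_le_div_iff₀ hden hden2]
  have hx' : x * (v + 1) = a * (v - 1) := by
    rw [hxval, div_mul_cancel₀ _ (ne_of_gt hv1)]
  have h2a : (a - x) * (v + 1) = 2 * a := by nlinarith
  have hdiv : (a - x) / v * v = a - x := div_mul_cancel₀ _ (ne_of_gt hv0)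
  nlinarith [mul_nonneg (sub_nonneg.2 htx) (by nlinarith : (0:ℝ) ≤ (v - 1) * (v + 1)), mul_pos hax hv1]
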